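/- Fix a probability mass function P on a finite set 𝒰 = {u_1, …, u_n} with n even and P(u_1) ≥ P(u_2) ≥ … ≥ P(u_n). Then the infimum, over all pairs of nonnegative functions Ã, B̃ : 𝒰 → [0, ∞) satisfying Ã(u) + B̃(u) = 2P(u) for every u ∈ 𝒰, of (1/2)γ̄(Ã) + (1/2)γ̄(B̃) equals ∑_{i=1}^{n/2} i · (P(u_{2i}) + P(u_{2i−1})), and it is attained by Ã*(u_{2i−1}) = 2P(u_{2i−1}), Ã*(u_{2i}) = 0, B̃*(u_{2i−1}) = 0, B̃*(u_{2i}) = 2P(u_{2i}) for i ∈ {1, …, n/2}. -/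
import Mathlib


open Finset

/-- The extended guesswork of a nonnegative function `A` on a finite set `U`:
the minimum over all bijections `G : U → {1,…,n}` of `∑ u, G(u) · A(u)`. -/
noncomputable def extGuesswork {U : Type*} [Fintype U] (A : U → ℝ) : ℝ :=
  ⨅ G : U ≃ Fin (Fintype.card U), ∑ u, ((G u).val + 1 : ℝ) * A u

/-- **Relaxed splitting problem, solved exactly.**
Fix a pmf `P` on `𝒰 = {u_1,…,u_n}` (realized as `Fin n`, so that `u_j` is the
index `j-1`), with `n` even and `P(u_1) ≥ … ≥ P(u_n)`.  The infimum, over all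
pairs of nonnegative functions `Ã, B̃` with `Ã(u) + B̃(u) = 2P(u)` for all `u`,
of `(1/2)γ̄(Ã) + (1/2)γ̄(B̃)` equals
`∑_{i=1}^{n/2} i (P(u_{2i}) + P(u_{2i-1}))` — in 0-based indices
`∑_{k=0}^{n-1} (⌊k/2⌋ + 1) P(u_{k+1})` — and it is attained by
`Ã*(u_{2i-1}) = 2P(u_{2i-1})`, `Ã*(u_{2i}) = 0`, `B̃*(u_{2i-1}) = 0`,
`B̃*(u_{2i}) = 2P(u_{2i})` (in 0-based indices: `Ã*` lives on even indices and
`B̃*` on odd indices). -/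
lemma strictMono_le_val {s : ℕ} {f : Fin s → ℕ} (hf : StrictMono f) :
    ∀ j (h : j < s), j ≤ f ⟨j, h⟩ := by
  intro j
  induction j with
  | zero => exact fun h => Nat.zero_le _
  | succ k ih =>
    intro h
    have hk : k < s := by omega
    have h1 := ih hk
    have h2 : f ⟨k, hk⟩ < f ⟨k + 1, h⟩ := hf (by simp [Fin.lt_def])
    omega

lemma sum_le_initial {n : ℕ} {P : Fin n → ℝ} (hAnti : Antitone P)
    (hnn : ∀ u, 0 ≤ P u) (S : Finset (Fin n)) {t : ℕ} (h : S.card ≤ t) :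
    ∑ u ∈ S, P u ≤ ∑ u ∈ univ.filter (fun u : Fin n => u.val < t), P u := by
  classical
  have hsn : S.card ≤ n := by simpa using S.card_le_univ
  set s := S.card with hs
  let e := S.orderEmbOfFin hs.symm
  have hmem : ∀ i : Fin s, e i ∈ S := fun i => S.orderEmbOfFin_mem hs.symm i
  have hsm : StrictMono fun i : Fin s => ((e i : Fin n) : ℕ) := by
    intro a b hab
    exact e.strictMono hab
  have hle : ∀ i : Fin s, (i : ℕ) ≤ ((e i : Fin n) : ℕ) := by
    intro i
    have := strictMono_le_val hsm i.val i.isLt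
    simpa using this
  have himg : Finset.image (fun i : Fin s => (e i : Fin n)) univ = S := by
    apply Finset.eq_of_subset_of_card_le
    · intro x hx
      simp only [Finset.mem_image] at hx
      obtain ⟨i, _, rfl⟩ := hx
      exact hmem i
    · rw [Finset.card_image_of_injective _ e.injective, Finset.card_univ, Fintype.card_fin]
  let ι : Fin s → Fin n := fun i => ⟨i.val, lt_of_lt_of_le i.isLt hsn⟩
  have hιinj : Function.Injective ι := by
    intro a b hab
    have := congrArg Fin.val hab
    exact Fin.ext this
  calc ∑ u ∈ S, P u = ∑ i : Fin s, P (e i) := by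
        rw [← himg, Finset.sum_image (fun a _ b _ hab => e.injective hab)]
    _ ≤ ∑ i : Fin s, P (ι i) := by
        apply Finset.sum_le_sum
        intro i _
        exact hAnti (by simpa [ι, Fin.le_def] using hle i)
    _ = ∑ u ∈ Finset.image ι univ, P u :=
        (Finset.sum_image (fun a _ b _ hab => hιinj hab)).symm
    _ ≤ ∑ u ∈ univ.filter (fun u : Fin n => u.val < t), P u := by
        apply Finset.sum_le_sum_of_subset_of_nonneg
        · intro x hx
          simp only [Finset.mem_image] at hx
          obtain ⟨i, _, rfl⟩ := hx
          simp only [Finset.mem_filter, Finset.mem_univ, true_and]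
          exact lt_of_lt_of_le i.isLt h
        · intro u _ _
          exact hnn u

lemma layer_cake {n : ℕ} (P : Fin n → ℝ) (w : Fin n → ℕ) (hw : ∀ u, w u ≤ n) :
    ∑ u, (w u : ℝ) * P u =
      ∑ t ∈ Finset.range n, ∑ u ∈ univ.filter (fun u => t < w u), P u := by
  have h1 : ∀ t, ∑ u ∈ univ.filter (fun u : Fin n => t < w u), P u
      = ∑ u, if t < w u then P u else 0 := fun t => Finset.sum_filter _ _
  simp_rw [h1]
  rw [Finset.sum_comm]
  apply Finset.sum_congr rfl
  intro u _
  have hfilt : (Finset.range n).filter (fun t => t < w u) = Finset.range (w u) := by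
    ext t
    simp only [Finset.mem_filter, Finset.mem_range]
    have := hw u
    omega
  calc (w u : ℝ) * P u = ∑ t ∈ (Finset.range n).filter (fun t => t < w u), P u := by
        rw [hfilt, Finset.sum_const, Finset.card_range, nsmul_eq_mul]
    _ = ∑ t ∈ Finset.range n, if t < w u then P u else 0 := Finset.sum_filter _ _

lemma card_filter_lt {n : ℕ} (G : Fin n ≃ Fin n) (t : ℕ) :
    (univ.filter (fun u : Fin n => (G u).val < t)).card ≤ t := by
  have h := Finset.card_le_card_of_injOn (fun u : Fin n => (G u).val)
    (s := univ.filter (fun u : Fin n => (G u).val < t)) (t := Finset.range t)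
    (fun a ha => Finset.mem_range.mpr (Finset.mem_filter.mp ha).2)
    (fun a _ b _ hab => G.injective (Fin.ext hab))
  simpa using h

lemma step2 {n : ℕ} {P : Fin n → ℝ} (hAnti : Antitone P) (hnn : ∀ u, 0 ≤ P u)
    (GA GB : Fin n ≃ Fin n) :
    ∑ k : Fin n, ((k.val / 2 + 1 : ℕ) : ℝ) * P k ≤
      ∑ u : Fin n, ((min (GA u).val (GB u).val + 1 : ℕ) : ℝ) * P u := by
  classical
  set m : Fin n → ℕ := fun u => min (GA u).val (GB u).val + 1 with hm
  have hwc : ∀ u : Fin n, u.val / 2 + 1 ≤ n := by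
    intro u; have := u.isLt; omega
  have hwm : ∀ u, m u ≤ n := by
    intro u; have := (GA u).isLt; simp only [hm]; omega
  rw [layer_cake P (fun k => k.val / 2 + 1) hwc, layer_cake P m hwm]
  apply Finset.sum_le_sum
  intro t _
  have hcardm : (univ.filter (fun u : Fin n => ¬ t < m u)).card ≤ 2 * t := by
    have hsub : (univ.filter (fun u : Fin n => ¬ t < m u)) ⊆
        (univ.filter (fun u : Fin n => (GA u).val < t)) ∪
          (univ.filter (fun u : Fin n => (GB u).val < t)) := by
      intro u hu
      simp only [Finset.mem_filter, Finset.mem_univ, true_and, Finset.mem_union,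
        not_lt, hm] at hu ⊢
      omega
    calc (univ.filter (fun u : Fin n => ¬ t < m u)).card
        ≤ _ := Finset.card_le_card hsub
      _ ≤ _ := Finset.card_union_le _ _
      _ ≤ 2 * t := by
          have := card_filter_lt GA t
          have := card_filter_lt GB t
          omega
  have hcs : (univ.filter (fun u : Fin n => t < u.val / 2 + 1)) =
      (univ.filter (fun u : Fin n => ¬ u.val < 2 * t)) := by
    ext u
    simp only [Finset.mem_filter, Finset.mem_univ, true_and]
    omega
  have h1 := Finset.sum_filter_add_sum_filter_not univ (fun u : Fin n => u.val < 2 * t) P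
  have h2 := Finset.sum_filter_add_sum_filter_not univ (fun u : Fin n => t < m u) P
  have h3 : ∑ u ∈ univ.filter (fun u : Fin n => ¬ t < m u), P u ≤
      ∑ u ∈ univ.filter (fun u : Fin n => u.val < 2 * t), P u :=
    sum_le_initial hAnti hnn _ hcardm
  rw [hcs]
  linarith

lemma extGuesswork_le {n : ℕ} (A : Fin n → ℝ) (G : Fin n ≃ Fin n) :
    extGuesswork A ≤ ∑ u, ((G u).val + 1 : ℝ) * A u := by
  rw [extGuesswork]
  refine le_of_le_of_eq (ciInf_le (Set.Finite.bddBelow (Set.finite_range _))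
    (G.trans (finCongr (Fintype.card_fin n).symm))) ?_
  apply Finset.sum_congr rfl
  intro u _
  simp

lemma extGuesswork_exists {n : ℕ} (A : Fin n → ℝ) :
    ∃ G : Fin n ≃ Fin n, ∑ u, ((G u).val + 1 : ℝ) * A u ≤ extGuesswork A := by
  have hne : Nonempty (Fin n ≃ Fin (Fintype.card (Fin n))) :=
    ⟨finCongr (Fintype.card_fin n).symm⟩
  obtain ⟨G0, -, hG0⟩ := Finset.exists_min_image univ
    (fun G : Fin n ≃ Fin (Fintype.card (Fin n)) => ∑ u, ((G u).val + 1 : ℝ) * A u)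
    Finset.univ_nonempty
  refine ⟨G0.trans (finCongr (Fintype.card_fin n)), ?_⟩
  have heq : ∑ u, (((G0.trans (finCongr (Fintype.card_fin n))) u).val + 1 : ℝ) * A u
      = ∑ u, ((G0 u).val + 1 : ℝ) * A u := by
    apply Finset.sum_congr rfl
    intro u _
    simp
  rw [heq, extGuesswork]
  exact le_ciInf (fun H => hG0 H (Finset.mem_univ H))

def splitFun (n p : ℕ) (hn : n % 2 = 0) : Fin n → Fin n := fun k =>
  ⟨if k.val % 2 = p then k.val / 2 else n / 2 + k.val / 2, by
    have := k.isLt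
    split <;> omega⟩

lemma splitFun_inj {n p : ℕ} (hn : n % 2 = 0) (hp : p < 2) :
    Function.Injective (splitFun n p hn) := by
  intro a b hab
  have ha := a.isLt
  have hb := b.isLt
  have h := congrArg Fin.val hab
  simp only [splitFun] at h
  apply Fin.ext
  split at h <;> split at h <;> omega

noncomputable def splitPerm (n p : ℕ) (hn : n % 2 = 0) (hp : p < 2) : Fin n ≃ Fin n :=
  Equiv.ofBijective _ (Finite.injective_iff_bijective.mp (splitFun_inj hn hp))

lemma splitPerm_val {n p : ℕ} (hn : n % 2 = 0) (hp : p < 2) (k : Fin n) :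
    ((splitPerm n p hn hp) k).val =
      if k.val % 2 = p then k.val / 2 else n / 2 + k.val / 2 := rfl

theorem relaxed_splitting_infimum
    {n : ℕ} (hn : Even n) (hpos : 0 < n)
    (P : Fin n → ℝ)
    (hAnti : Antitone P)
    (hnn : ∀ u, 0 ≤ P u)
    (hsum : ∑ u, P u = 1) :
    (sInf {r : ℝ | ∃ A B : Fin n → ℝ,
        (∀ u, 0 ≤ A u) ∧ (∀ u, 0 ≤ B u) ∧
        (∀ u, A u + B u = 2 * P u) ∧
        r = (1 / 2) * extGuesswork A + (1 / 2) * extGuesswork B} =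
      ∑ k : Fin n, ((k.val / 2 + 1 : ℕ) : ℝ) * P k)
    ∧ ((1 / 2) * extGuesswork (fun k : Fin n => if k.val % 2 = 0 then 2 * P k else 0)
        + (1 / 2) * extGuesswork (fun k : Fin n => if k.val % 2 = 1 then 2 * P k else 0)
      = ∑ k : Fin n, ((k.val / 2 + 1 : ℕ) : ℝ) * P k) := by
  classical
  have hn2 : n % 2 = 0 := Nat.even_iff.mp hn
  set Starget : ℝ := ∑ k : Fin n, ((k.val / 2 + 1 : ℕ) : ℝ) * P k with hSt
  set Astar : Fin n → ℝ := fun k => if k.val % 2 = 0 then 2 * P k else 0 with hAstar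
  set Bstar : Fin n → ℝ := fun k => if k.val % 2 = 1 then 2 * P k else 0 with hBstar
  -- feasibility of the candidate
  have hAnn : ∀ u, 0 ≤ Astar u := by
    intro u
    simp only [hAstar]
    split
    · linarith [hnn u]
    · exact le_refl 0
  have hBnn : ∀ u, 0 ≤ Bstar u := by
    intro u
    simp only [hBstar]
    split
    · linarith [hnn u]
    · exact le_refl 0
  have hABsum : ∀ u, Astar u + Bstar u = 2 * P u := by
    intro u
    have h2 : u.val % 2 < 2 := Nat.mod_lt _ (by norm_num)
    simp only [hAstar, hBstar]
    by_cases h : u.val % 2 = 0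
    · have h1 : ¬ u.val % 2 = 1 := by omega
      simp [h, h1]
    · have h1 : u.val % 2 = 1 := by omega
      simp [h, h1]
  -- lower bound
  have hLB : ∀ A B : Fin n → ℝ, (∀ u, 0 ≤ A u) → (∀ u, 0 ≤ B u) →
      (∀ u, A u + B u = 2 * P u) →
      Starget ≤ (1 / 2) * extGuesswork A + (1 / 2) * extGuesswork B := by
    intro A B hA hB hAB
    obtain ⟨GA, hGA⟩ := extGuesswork_exists A
    obtain ⟨GB, hGB⟩ := extGuesswork_exists B
    have hstep2 := step2 hAnti hnn GA GB
    have hstep1 : ∑ u : Fin n, ((min (GA u).val (GB u).val + 1 : ℕ) : ℝ) * (2 * P u) ≤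
        (∑ u, ((GA u).val + 1 : ℝ) * A u) + ∑ u, ((GB u).val + 1 : ℝ) * B u := by
      rw [← Finset.sum_add_distrib]
      apply Finset.sum_le_sum
      intro u _
      have hm1 : ((min (GA u).val (GB u).val + 1 : ℕ) : ℝ) ≤ ((GA u).val + 1 : ℝ) := by
        have : (min (GA u).val (GB u).val + 1 : ℕ) ≤ (GA u).val + 1 := by omega
        exact_mod_cast Nat.cast_le.mpr this
      have hm2 : ((min (GA u).val (GB u).val + 1 : ℕ) : ℝ) ≤ ((GB u).val + 1 : ℝ) := by
        have : (min (GA u).val (GB u).val + 1 : ℕ) ≤ (GB u).val + 1 := by omega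
        exact_mod_cast Nat.cast_le.mpr this
      calc ((min (GA u).val (GB u).val + 1 : ℕ) : ℝ) * (2 * P u)
          = ((min (GA u).val (GB u).val + 1 : ℕ) : ℝ) * A u
            + ((min (GA u).val (GB u).val + 1 : ℕ) : ℝ) * B u := by
            rw [← hAB u]; ring
        _ ≤ ((GA u).val + 1 : ℝ) * A u + ((GB u).val + 1 : ℝ) * B u :=
            add_le_add (mul_le_mul_of_nonneg_right hm1 (hA u))
              (mul_le_mul_of_nonneg_right hm2 (hB u))
    have hdouble : ∑ u : Fin n, ((min (GA u).val (GB u).val + 1 : ℕ) : ℝ) * (2 * P u)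
        = 2 * ∑ u : Fin n, ((min (GA u).val (GB u).val + 1 : ℕ) : ℝ) * P u := by
      rw [Finset.mul_sum]
      apply Finset.sum_congr rfl
      intro u _
      ring
    have h2S : 2 * Starget ≤ extGuesswork A + extGuesswork B := by
      have := hstep1
      rw [hdouble] at this
      linarith [hGA, hGB, hstep2]
    linarith
  -- upper bound for the candidate
  have hp0 : (0 : ℕ) < 2 := by norm_num
  have hp1 : (1 : ℕ) < 2 := by norm_num
  have hUBA : extGuesswork Astar ≤
      ∑ u : Fin n, (if u.val % 2 = 0 then ((u.val / 2 + 1 : ℕ) : ℝ) * (2 * P u) else 0) := by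
    refine le_of_le_of_eq (extGuesswork_le Astar (splitPerm n 0 hn2 hp0)) ?_
    apply Finset.sum_congr rfl
    intro u _
    rw [splitPerm_val]
    simp only [hAstar]
    by_cases h : u.val % 2 = 0
    · simp only [h, if_true]
      push_cast
      ring
    · simp [h]
  have hUBB : extGuesswork Bstar ≤
      ∑ u : Fin n, (if u.val % 2 = 1 then ((u.val / 2 + 1 : ℕ) : ℝ) * (2 * P u) else 0) := by
    refine le_of_le_of_eq (extGuesswork_le Bstar (splitPerm n 1 hn2 hp1)) ?_
    apply Finset.sum_congr rfl
    intro u _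
    rw [splitPerm_val]
    simp only [hBstar]
    by_cases h : u.val % 2 = 1
    · simp only [h, if_true]
      push_cast
      ring
    · simp [h]
  have hhalf : (1 / 2) * (∑ u : Fin n, (if u.val % 2 = 0 then ((u.val / 2 + 1 : ℕ) : ℝ) * (2 * P u) else 0))
      + (1 / 2) * (∑ u : Fin n, (if u.val % 2 = 1 then ((u.val / 2 + 1 : ℕ) : ℝ) * (2 * P u) else 0))
      = Starget := by
    rw [hSt, Finset.mul_sum, Finset.mul_sum, ← Finset.sum_add_distrib]
    apply Finset.sum_congr rfl
    intro u _
    by_cases h : u.val % 2 = 0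
    · have h1 : ¬ u.val % 2 = 1 := by omega
      simp only [if_pos h, if_neg h1]
      ring
    · have h1 : u.val % 2 = 1 := by omega
      simp only [if_pos h1, if_neg h]
      ring
  have hUB : (1 / 2) * extGuesswork Astar + (1 / 2) * extGuesswork Bstar ≤ Starget := by
    rw [← hhalf]
    have : (0:ℝ) < 1/2 := by norm_num
    nlinarith [hUBA, hUBB]
  have hmain2 : (1 / 2) * extGuesswork Astar + (1 / 2) * extGuesswork Bstar = Starget :=
    le_antisymm hUB (hLB Astar Bstar hAnn hBnn hABsum)
  refine ⟨?_, hmain2⟩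
  have hmem : Starget ∈ {r : ℝ | ∃ A B : Fin n → ℝ,
      (∀ u, 0 ≤ A u) ∧ (∀ u, 0 ≤ B u) ∧
      (∀ u, A u + B u = 2 * P u) ∧
      r = (1 / 2) * extGuesswork A + (1 / 2) * extGuesswork B} :=
    ⟨Astar, Bstar, hAnn, hBnn, hABsum, hmain2.symm⟩
  have hlb : ∀ r ∈ {r : ℝ | ∃ A B : Fin n → ℝ,
      (∀ u, 0 ≤ A u) ∧ (∀ u, 0 ≤ B u) ∧
      (∀ u, A u + B u = 2 * P u) ∧
      r = (1 / 2) * extGuesswork A + (1 / 2) * extGuesswork B}, Starget ≤ r := by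
    rintro r ⟨A, B, h1, h2, h3, rfl⟩
    exact hLB A B h1 h2 h3
  exact le_antisymm (csInf_le ⟨Starget, hlb⟩ hmem) (le_csInf ⟨Starget, hmem⟩ hlb)
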